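/- Riccati asymptotics at the vertex (flat limit of tr χ): Let s₀ > 0, let h : (0,s₀] → ℝ be continuous and bounded, and let φ : (0,s₀] → ℝ be differentiable and satisfy φ′(s) + (1/2)φ(s)² + h(s) = 0 for all s ∈ (0,s₀], together with lim_{s→0⁺} s·φ(s) = 2. Then lim_{s→0⁺} (φ(s) − 2/s) = 0. -/

import Mathlib

/- STATEMENT 7: Riccati asymptotics at the vertex: if φ′ + (1/2)φ² + h = 0 on (0,s₀]
   with h continuous and bounded, and s·φ(s) → 2 as s → 0⁺, then φ(s) − 2/s → 0. -/

open Filter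

set_option maxHeartbeats 1000000 in
theorem riccati_vertex_asymptotics
    (s₀ : ℝ) (hs₀ : 0 < s₀) (h φ : ℝ → ℝ)
    (hcont : ContinuousOn h (Set.Ioc 0 s₀))
    (hbdd : ∃ C : ℝ, ∀ s ∈ Set.Ioc (0:ℝ) s₀, |h s| ≤ C)
    (hode : ∀ s ∈ Set.Ioc (0:ℝ) s₀,
      HasDerivWithinAt φ (-((1/2) * (φ s)^2 + h s)) (Set.Ioc 0 s₀) s)
    (hinit : Tendsto (fun s => s * φ s) (nhdsWithin 0 (Set.Ioi 0)) (nhds 2)) :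
    Tendsto (fun s => φ s - 2 / s) (nhdsWithin 0 (Set.Ioi 0)) (nhds 0) := by
  obtain ⟨C, hC⟩ := hbdd
  set C' : ℝ := |C| + 1 with hC'def
  have hC'pos : (0:ℝ) < C' := by positivity
  have hCle : ∀ s ∈ Set.Ioc (0:ℝ) s₀, |h s| ≤ C' := fun s hs =>
    (hC s hs).trans (by rw [hC'def]; linarith [le_abs_self C])
  clear_value C'
  clear hC hC'def
  set g : ℝ → ℝ := fun t => t^2 * φ t - 2*t with hgdef
  set g' : ℝ → ℝ := fun t => -((1/2)*(t*φ t - 2)^2) - t^2 * h t with hg'def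
  clear_value g g'
  have hid : Tendsto (fun a : ℝ => a) (nhdsWithin 0 (Set.Ioi 0)) (nhds 0) :=
    tendsto_id.mono_right nhdsWithin_le_nhds
  -- derivative of g
  have hgd : ∀ t ∈ Set.Ioc (0:ℝ) s₀, HasDerivWithinAt g (g' t) (Set.Ioc 0 s₀) t := by
    intro t ht
    rw [hgdef, hg'def]
    have h1 : HasDerivWithinAt (fun x : ℝ => x^2) (((2:ℕ):ℝ) * t ^ (2-1)) (Set.Ioc 0 s₀) t :=
      hasDerivWithinAt_pow 2 t
    have h2 := h1.mul (hode t ht)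
    have h3 : HasDerivWithinAt (fun x : ℝ => 2*x) (2*1) (Set.Ioc 0 s₀) t :=
      (hasDerivWithinAt_id t _).const_mul 2
    have h4 := h2.sub h3
    refine h4.congr_deriv ?_
    beta_reduce
    push_cast
    ring
  -- g tends to 0
  have hg0 : Tendsto g (nhdsWithin 0 (Set.Ioi 0)) (nhds 0) := by
    have h1 : Tendsto (fun a : ℝ => a * (a * φ a) - 2*a) (nhdsWithin 0 (Set.Ioi 0))
        (nhds (0*2 - 2*0)) := (hid.mul hinit).sub (hid.const_mul 2)
    have h2 : Tendsto g (nhdsWithin 0 (Set.Ioi 0)) (nhds (0*2 - 2*0)) :=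
      Tendsto.congr (fun a => by simp only [hgdef]; ring) h1
    simpa using h2
  -- choose δ
  obtain ⟨u, hu, hu14⟩ : ∃ u ∈ Set.Ioi (0:ℝ), ∀ s ∈ Set.Ioc (0:ℝ) u, |s * φ s - 2| ≤ 1/4 := by
    have h14 : ∀ᶠ s in nhdsWithin 0 (Set.Ioi 0), |s * φ s - 2| ≤ 1/4 := by
      have := Metric.tendsto_nhds.mp hinit (1/4) (by norm_num)
      filter_upwards [this] with s hs
      rw [Real.dist_eq] at hs; exact hs.le
    obtain ⟨v, hv, hsub⟩ := mem_nhdsGT_iff_exists_Ioc_subset.mp h14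
    exact ⟨v, hv, fun s hs => hsub hs⟩
  set δ : ℝ := min (min s₀ u) (min 1 (1/(16*C'))) with hδdef
  have hδpos : 0 < δ := by
    rw [hδdef]
    simp only [lt_min_iff]
    refine ⟨⟨hs₀, hu⟩, by norm_num, by positivity⟩
  have hδs₀ : δ ≤ s₀ := (min_le_left _ _).trans (min_le_left _ _)
  have hδu : δ ≤ u := (min_le_left _ _).trans (min_le_right _ _)
  have hδ1 : δ ≤ 1 := (min_le_right _ _).trans (min_le_left _ _)
  have hδC : δ ≤ 1/(16*C') := (min_le_right _ _).trans (min_le_right _ _)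
  clear_value δ
  clear hδdef
  have hδC2 : C' * δ^2 ≤ 1/16 := by
    have h1 : δ^2 ≤ δ := by nlinarith
    have h2 : C' * δ ≤ C' * (1/(16*C')) := by nlinarith
    have h3 : C' * (1/(16*C')) = 1/16 := by field_simp
    nlinarith
  -- key integration step
  have key : ∀ a b : ℝ, 0 ≤ a → 0 ≤ b →
      (∀ t ∈ Set.Ioc (0:ℝ) δ, |g t| ≤ (a + b*t^2)*t) →
      ∀ s ∈ Set.Ioc (0:ℝ) δ, |g s| ≤ ((1/2)*(a + b*s^2)^2 + C'*s^2) * s := by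
    intro a b ha hb hyp s hs
    set K : ℝ := (1/2)*(a + b*s^2)^2 + C'*s^2 with hK
    have hKnn : 0 ≤ K := by positivity
    clear_value K
    have step : ∀ v ∈ Set.Ioc (0:ℝ) s, |g s - g v| ≤ K * (s - v) := by
      intro v hv
      have hsub : Set.Icc v s ⊆ Set.Ioc (0:ℝ) s₀ := fun t ht =>
        ⟨lt_of_lt_of_le hv.1 ht.1, le_trans ht.2 (hs.2.trans hδs₀)⟩
      have hsubδ : Set.Icc v s ⊆ Set.Ioc (0:ℝ) δ := fun t ht =>
        ⟨lt_of_lt_of_le hv.1 ht.1, le_trans ht.2 hs.2⟩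
      have hderiv : ∀ t ∈ Set.Icc v s, HasDerivWithinAt g (g' t) (Set.Icc v s) t :=
        fun t ht => (hgd t (hsub ht)).mono hsub
      have hbound : ∀ t ∈ Set.Icc v s, ‖g' t‖ ≤ K := by
        intro t ht
        have htδ := hsubδ ht
        have ht0 : 0 < t := htδ.1
        have e1 : g t = t * (t*φ t - 2) := by simp only [hgdef]; ring
        have e2 : |g t| = t * |t*φ t - 2| := by
          rw [e1, abs_mul, abs_of_pos ht0]
        have e3 : |t*φ t - 2| ≤ a + b*t^2 := by
          have h5 := hyp t htδ
          rw [e2] at h5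
          have h6 : t * |t*φ t - 2| ≤ t * (a + b*t^2) := by nlinarith
          exact le_of_mul_le_mul_left h6 ht0
        have e4 : |h t| ≤ C' := hCle t (hsub ht)
        have h6 : |t^2 * h t| ≤ C' * t^2 := by
          rw [abs_mul, abs_of_nonneg (sq_nonneg t)]
          nlinarith [sq_nonneg t]
        have h7 : |(-((1/2)*(t*φ t - 2)^2))| = (1/2)*(t*φ t - 2)^2 := by
          rw [abs_neg, abs_of_nonneg (by positivity)]
        have e5 : |g' t| ≤ (1/2)*(t*φ t - 2)^2 + C'*t^2 := by
          have h8 : |g' t| ≤ |(-((1/2)*(t*φ t - 2)^2))| + |t^2 * h t| := by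
            rw [hg'def]
            exact abs_sub _ _
          rw [h7] at h8
          linarith
        have ht2 : t^2 ≤ s^2 := by nlinarith [ht.2, ht0.le, hs.1.le]
        have e3' : |t*φ t - 2| ≤ a + b*s^2 := e3.trans (by nlinarith)
        have e6 : (t*φ t - 2)^2 ≤ (a + b*s^2)^2 := by
          have := pow_le_pow_left₀ (abs_nonneg (t*φ t - 2)) e3' 2
          rwa [sq_abs] at this
        rw [Real.norm_eq_abs, hK]
        nlinarith
      have h9 := (convex_Icc v s).norm_image_sub_le_of_norm_hasDerivWithin_le hderiv hbound
        (Set.left_mem_Icc.mpr hv.2) (Set.right_mem_Icc.mpr hv.2)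
      rw [Real.norm_eq_abs, Real.norm_eq_abs,
        abs_of_nonneg (by linarith [hv.2] : (0:ℝ) ≤ s - v)] at h9
      exact h9
    have hlim : Tendsto (fun v => K*(s-v) + |g v|) (nhdsWithin 0 (Set.Ioi 0))
        (nhds (K*(s-0) + |(0:ℝ)|)) := by
      exact ((tendsto_const_nhds.sub hid).const_mul K).add hg0.abs
    have hev : ∀ᶠ v in nhdsWithin 0 (Set.Ioi 0), |g s| ≤ K*(s-v) + |g v| := by
      filter_upwards [Ioc_mem_nhdsGT hs.1] with v hv
      have h10 := step v hv
      have h11 : |g s| ≤ |g s - g v| + |g v| := by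
        have := abs_add_le (g s - g v) (g v)
        simpa using this
      linarith
    have h12 := ge_of_tendsto hlim hev
    simpa only [sub_zero, abs_zero, add_zero] using h12
  -- base case
  have base : ∀ s ∈ Set.Ioc (0:ℝ) δ, |g s| ≤ ((1/4)*(1/8:ℝ)^0 + 2*C'*s^2)*s := by
    intro s hs
    have h1 : |s*φ s - 2| ≤ 1/4 := hu14 s ⟨hs.1, hs.2.trans hδu⟩
    have e1 : g s = s * (s*φ s - 2) := by simp only [hgdef]; ring
    have e2 : |g s| = s * |s*φ s - 2| := by rw [e1, abs_mul, abs_of_pos hs.1]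
    rw [e2]
    have hs0 := hs.1
    nlinarith [sq_nonneg s, mul_pos hC'pos (mul_pos hs0 hs0)]
  -- induction
  have main : ∀ n : ℕ, ∀ s ∈ Set.Ioc (0:ℝ) δ, |g s| ≤ ((1/4)*(1/8:ℝ)^n + 2*C'*s^2)*s := by
    intro n
    induction n with
    | zero => exact base
    | succ n ih =>
      intro s hs
      have hle := key ((1/4)*(1/8:ℝ)^n) (2*C') (by positivity) (by positivity) ih s hs
      refine hle.trans ?_
      have hs2 : s^2 ≤ δ^2 := by nlinarith [hs.1.le, hs.2]
      have hpn : (0:ℝ) < (1/8:ℝ)^n := by positivity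
      have han : (1/4)*(1/8:ℝ)^n ≤ 1/4 := by
        have : (1/8:ℝ)^n ≤ 1 := pow_le_one₀ (by norm_num) (by norm_num)
        linarith
      have hCs2 : C'*s^2 ≤ 1/16 := by nlinarith
      have hs0 := hs.1
      have hpow : ((1/8:ℝ)^(n+1)) = (1/8) * (1/8:ℝ)^n := by ring
      have hentry : (1/2)*((1/4)*(1/8:ℝ)^n + 2*C'*s^2)^2 + C'*s^2
          ≤ (1/4)*(1/8:ℝ)^(n+1) + 2*C'*s^2 := by
        rw [hpow]
        nlinarith [sq_nonneg ((1/8:ℝ)^n), sq_nonneg (C'*s^2),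
          mul_nonneg (mul_pos hC'pos (mul_pos hs0 hs0)).le hpn.le]
      nlinarith
  -- pass to n → ∞
  have final : ∀ s ∈ Set.Ioc (0:ℝ) δ, |g s| ≤ 2*C'*s^3 := by
    intro s hs
    have hlim : Tendsto (fun n : ℕ => ((1/4)*(1/8:ℝ)^n + 2*C'*s^2)*s) atTop
        (nhds (((1/4)*0 + 2*C'*s^2)*s)) := by
      apply Tendsto.mul_const
      exact ((tendsto_pow_atTop_nhds_zero_of_lt_one (by norm_num) (by norm_num)).const_mul _).add
        tendsto_const_nhds
    have h1 := ge_of_tendsto hlim (Filter.Eventually.of_forall (fun n => main n s hs))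
    calc |g s| ≤ ((1/4)*0 + 2*C'*s^2)*s := h1
      _ = 2*C'*s^3 := by ring
  -- final squeeze
  have h2C : Tendsto (fun s : ℝ => 2*C'*s) (nhdsWithin 0 (Set.Ioi 0)) (nhds 0) := by
    have := hid.const_mul (2*C')
    simpa using this
  apply squeeze_zero_norm' ?_ h2C
  filter_upwards [Ioc_mem_nhdsGT hδpos] with s hs
  have hs0 : (0:ℝ) < s := hs.1
  have hs0' : s ≠ 0 := ne_of_gt hs0
  have e : φ s - 2/s = g s / s^2 := by
    simp only [hgdef]
    field_simp
  rw [Real.norm_eq_abs, e, abs_div, abs_of_pos (by positivity : (0:ℝ) < s^2),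
    div_le_iff₀ (by positivity : (0:ℝ) < s^2)]
  calc |g s| ≤ 2*C'*s^3 := final s hs
    _ = 2*C'*s * s^2 := by ring
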